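/- For all large enough T, the learning-rate schedule β_1 = 1/T^{c_0}, β_t = (c_1 log T/T)·min{β_1(1+c_1 log T/T)^t, 1} satisfies ᾱ_T ≤ 1/T^{c_2} for some numerical constant c_2 ≥ 1000. Moreover, there exists a universal constant C > 0 such that for any d ≥ 1 and any 2 ≤ t ≤ T with d(1−α_t)/(α_t−ᾱ_t) ≤ 1/C, one has | ((1−ᾱ_t)/(α_t−ᾱ_t))^{d/2} − [1 + d(1−α_t)/(2(α_t−ᾱ_t)) + d(d−2)(1−α_t)²/(8(α_t−ᾱ_t)²)] | ≤ C·d³·((1−α_t)/(α_t−ᾱ_t))³. -/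

import Mathlib

/-!
Formalization setup for "Accelerating Convergence of Score-Based Diffusion Models, Provably".

We work on `ℝ^d = EuclideanSpace ℝ (Fin d)`.  The data distribution is described by a
Lebesgue density `pdata`.  The forward process is `X_t = √ᾱ_t • X₀ + √(1-ᾱ_t) • W̄_t`,
whose density `q_t` is given by the explicit Gaussian convolution formula.  Samplers are
described as laws (measures) obtained by pushing the standard Gaussian `N(0, I_d)` through
the corresponding update maps.
-/

open MeasureTheory Real Filter
open scoped ENNReal NNReal BigOperators RealInnerProductSpace Topology

noncomputable section

namespace Paper

/-- `ℝ^d` with the Euclidean structure. -/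
abbrev Vec (d : ℕ) : Type := EuclideanSpace ℝ (Fin d)

variable {d : ℕ}

/-- Isotropic Gaussian density with per-coordinate variance `v` on `ℝ^d`. -/
def gaussPdf (d : ℕ) (v : ℝ) (x : Vec d) : ℝ :=
  (2 * π * v) ^ (-(d : ℝ) / 2) * Real.exp (-‖x‖ ^ 2 / (2 * v))

/-- The standard Gaussian measure `N(0, I_d)` on `ℝ^d`. -/
def stdGaussian (d : ℕ) : Measure (Vec d) :=
  volume.withDensity fun x => ENNReal.ofReal (gaussPdf d 1 x)

/-- The learning-rate schedule: `β₁ = 1/T^{c₀}` and, for `t > 1`,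
`β_t = (c₁ log T / T) · min{β₁ (1 + c₁ log T / T)^t, 1}`. -/
def beta (T : ℕ) (c0 c1 : ℝ) (t : ℕ) : ℝ :=
  if t ≤ 1 then 1 / (T : ℝ) ^ c0
  else c1 * Real.log T / T * min (1 / (T : ℝ) ^ c0 * (1 + c1 * Real.log T / T) ^ t) 1

/-- `α_t = 1 - β_t`. -/
def alpha (T : ℕ) (c0 c1 : ℝ) (t : ℕ) : ℝ := 1 - beta T c0 c1 t

/-- `ᾱ_t = ∏_{k=1}^t α_k`. -/
def alphaBar (T : ℕ) (c0 c1 : ℝ) (t : ℕ) : ℝ := ∏ k ∈ Finset.Icc 1 t, alpha T c0 c1 k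

/-- Density of `scale • X₀ + √v • W` when `X₀` has density `pdata` and `W ~ N(0, I_d)`. -/
def qGen (pdata : Vec d → ℝ) (scale v : ℝ) (x : Vec d) : ℝ :=
  ∫ x0, pdata x0 * gaussPdf d v (x - scale • x0)

/-- Density `q_t` of `X_t = √a • X₀ + √(1-a) • W̄`  (with `a = ᾱ_t`). -/
def qFun (pdata : Vec d → ℝ) (a : ℝ) (x : Vec d) : ℝ :=
  qGen pdata (Real.sqrt a) (1 - a) x

/-- Conditional density `p_{X₀|X_t}(x₀|x)`. -/
def condPdf (pdata : Vec d → ℝ) (a : ℝ) (x0 x : Vec d) : ℝ :=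
  pdata x0 * gaussPdf d (1 - a) (x - Real.sqrt a • x0) / qFun pdata a x

/-- The score function `s_t⋆ = ∇ log q_t`. -/
def scoreFun (pdata : Vec d → ℝ) (a : ℝ) (x : Vec d) : Vec d :=
  gradient (fun y => Real.log (qFun pdata a y)) x

/-- `g_t(x) = ∫ (x - √a • x₀) p_{X₀|X_t}(x₀|x) dx₀`. -/
def gFun (pdata : Vec d → ℝ) (a : ℝ) (x : Vec d) : Vec d :=
  ∫ x0, condPdf pdata a x0 x • (x - Real.sqrt a • x0)

/-- `J_t(x) = ∂/∂x (-(1-ᾱ_t) s_t⋆(x))`. -/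
def Jmat (pdata : Vec d → ℝ) (a : ℝ) (x : Vec d) : Vec d →L[ℝ] Vec d :=
  fderiv ℝ (fun y => -((1 - a) • scoreFun pdata a y)) x

/-- Total-variation distance between two densities: `½∫|f - g|`. -/
def tvFun (f g : Vec d → ℝ) : ℝ := (∫ x, |f x - g x|) / 2

/-- KL divergence between two densities: `∫ f log (f/g)`. -/
def klFun (f g : Vec d → ℝ) : ℝ := ∫ x, f x * Real.log (f x / g x)

/-- The Lebesgue density of a measure. -/
def densityOf (μ : Measure (Vec d)) (x : Vec d) : ℝ := (μ.rnDeriv volume x).toReal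

/-- `φ_t(x) = x - ((1-α_{t+1})/2) • s_t(x)`. -/
def phiMap (T : ℕ) (c0 c1 : ℝ) (s : ℕ → Vec d → Vec d) (t : ℕ) (x : Vec d) : Vec d :=
  x - ((1 - alpha T c0 c1 (t + 1)) / 2) • s t x

/-- `Φ_t(x) = √α_{t+1} • φ_t(x)` (the mid-point map of the accelerated ODE sampler). -/
def PhiMap (T : ℕ) (c0 c1 : ℝ) (s : ℕ → Vec d → Vec d) (t : ℕ) (x : Vec d) : Vec d :=
  Real.sqrt (alpha T c0 c1 (t + 1)) • phiMap T c0 c1 s t x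

/-- `ψ_t(x) = x + ((1-α_t)/2) s_t(x)
      + ((1-α_t)²/(4(1-α_{t+1}))) (s_t(x) - √α_{t+1} s_{t+1}(Φ_t(x)/√α_{t+1}))`. -/
def psiMap (T : ℕ) (c0 c1 : ℝ) (s : ℕ → Vec d → Vec d) (t : ℕ) (x : Vec d) : Vec d :=
  x + ((1 - alpha T c0 c1 t) / 2) • s t x +
    ((1 - alpha T c0 c1 t) ^ 2 / (4 * (1 - alpha T c0 c1 (t + 1)))) •
      (s t x - Real.sqrt (alpha T c0 c1 (t + 1)) • s (t + 1) (PhiMap T c0 c1 s t x))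

/-- One step of the accelerated deterministic sampler:
`Y_{t-1} = Ψ_t(Y_t, Φ_t(Y_t)) = (1/√α_t) • ψ_t(Y_t)`. -/
def odeStep (T : ℕ) (c0 c1 : ℝ) (s : ℕ → Vec d → Vec d) (t : ℕ) (x : Vec d) : Vec d :=
  (Real.sqrt (alpha T c0 c1 t))⁻¹ • psiMap T c0 c1 s t x

/-- Law of `Y_{T-k}` for the accelerated deterministic sampler started from `Y_T ~ N(0, I_d)`. -/
def odeLawAux (d T : ℕ) (c0 c1 : ℝ) (s : ℕ → Vec d → Vec d) : ℕ → Measure (Vec d)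
  | 0 => stdGaussian d
  | k + 1 => Measure.map (odeStep T c0 c1 s (T - k)) (odeLawAux d T c0 c1 s k)

/-- Law `p_t` of `Y_t` for the accelerated deterministic sampler. -/
def odeLaw (d T : ℕ) (c0 c1 : ℝ) (s : ℕ → Vec d → Vec d) (t : ℕ) : Measure (Vec d) :=
  odeLawAux d T c0 c1 s (T - t)

/-- Deterministic trajectory `y_{T-k}` of the accelerated ODE sampler started at `yT`. -/
def odeSeqAux (d T : ℕ) (c0 c1 : ℝ) (s : ℕ → Vec d → Vec d) (yT : Vec d) : ℕ → Vec d
  | 0 => yT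
  | k + 1 => odeStep T c0 c1 s (T - k) (odeSeqAux d T c0 c1 s yT k)

/-- The point `y_t` of the deterministic trajectory started at `yT`. -/
def odeSeq (d T : ℕ) (c0 c1 : ℝ) (s : ℕ → Vec d → Vec d) (yT : Vec d) (t : ℕ) : Vec d :=
  odeSeqAux d T c0 c1 s yT (T - t)

/-- One step of the accelerated stochastic sampler:
`Y_{t-1} = (1/√α_t) • (Y_t⁺ + (1-α_t) s_t(Y_t⁺) + √((1-α_t)/2) Z_t⁺)` where
`Y_t⁺ = Y_t + √((1-α_t)/2) Z_t`. -/
def sdeStep (T : ℕ) (c0 c1 : ℝ) (s : ℕ → Vec d → Vec d) (t : ℕ) (x z zp : Vec d) : Vec d :=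
  (Real.sqrt (alpha T c0 c1 t))⁻¹ •
    (x + Real.sqrt ((1 - alpha T c0 c1 t) / 2) • z +
      (1 - alpha T c0 c1 t) • s t (x + Real.sqrt ((1 - alpha T c0 c1 t) / 2) • z) +
        Real.sqrt ((1 - alpha T c0 c1 t) / 2) • zp)

/-- Law of `Y_{T-k}` for the accelerated stochastic sampler started from `Y_T ~ N(0, I_d)`. -/
def sdeLawAux (d T : ℕ) (c0 c1 : ℝ) (s : ℕ → Vec d → Vec d) : ℕ → Measure (Vec d)
  | 0 => stdGaussian d
  | k + 1 => Measure.map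
      (fun p : Vec d × Vec d × Vec d => sdeStep T c0 c1 s (T - k) p.1 p.2.1 p.2.2)
      ((sdeLawAux d T c0 c1 s k).prod ((stdGaussian d).prod (stdGaussian d)))

/-- Law `p_t` of `Y_t` for the accelerated stochastic sampler. -/
def sdeLaw (d T : ℕ) (c0 c1 : ℝ) (s : ℕ → Vec d → Vec d) (t : ℕ) : Measure (Vec d) :=
  sdeLawAux d T c0 c1 s (T - t)

/-- Pointwise score estimation error `ε_{score,t}(x) = ‖s_t(x) - s_t⋆(x)‖₂`. -/
def epsScore (T : ℕ) (c0 c1 : ℝ) (pdata : Vec d → ℝ) (s : ℕ → Vec d → Vec d)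
    (t : ℕ) (x : Vec d) : ℝ :=
  ‖s t x - scoreFun pdata (alphaBar T c0 c1 t) x‖

/-- Pointwise Jacobian estimation error `ε_{Jacobi,t}(x) = ‖J_{s_t}(x) - J_{s_t⋆}(x)‖`. -/
def epsJacobi (T : ℕ) (c0 c1 : ℝ) (pdata : Vec d → ℝ) (s : ℕ → Vec d → Vec d)
    (t : ℕ) (x : Vec d) : ℝ :=
  ‖fderiv ℝ (s t) x - fderiv ℝ (scoreFun pdata (alphaBar T c0 c1 t)) x‖

/-- `θ(y) = max{-log q_t(y)/(d log T), c₆}`. -/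
def thetaY (T : ℕ) (c0 c1 c6 : ℝ) (pdata : Vec d → ℝ) (t : ℕ) (y : Vec d) : ℝ :=
  max (-(Real.log (qFun pdata (alphaBar T c0 c1 t) y)) / ((d : ℝ) * Real.log T)) c6

/-- `A_t(x)`. -/
def AtQ (pdata : Vec d → ℝ) (a : ℝ) (x : Vec d) : ℝ :=
  (1 - a)⁻¹ * ∫ x0, condPdf pdata a x0 x * ‖x - Real.sqrt a • x0‖ ^ 2

/-- `B_t(x)`. -/
def BtQ (pdata : Vec d → ℝ) (a : ℝ) (x : Vec d) : ℝ :=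
  (1 - a)⁻¹ * ‖∫ x0, condPdf pdata a x0 x • (x - Real.sqrt a • x0)‖ ^ 2

/-- `C_t(x)`. -/
def CtQ (pdata : Vec d → ℝ) (a : ℝ) (x : Vec d) : ℝ :=
  ((1 - a) ^ 2)⁻¹ * ∫ x0, condPdf pdata a x0 x * ‖x - Real.sqrt a • x0‖ ^ 4

/-- `D_t(x)`. -/
def DtQ (pdata : Vec d → ℝ) (a : ℝ) (x : Vec d) : ℝ :=
  ((1 - a) ^ 2)⁻¹ * ∫ x0, condPdf pdata a x0 x * ⟪gFun pdata a x, x - Real.sqrt a • x0⟫ ^ 2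

/-- `E_t(x)`. -/
def EtQ (pdata : Vec d → ℝ) (a : ℝ) (x : Vec d) : ℝ :=
  ((1 - a) ^ 2)⁻¹ * ∫ x0, condPdf pdata a x0 x *
    (‖x - Real.sqrt a • x0‖ ^ 2 * ⟪gFun pdata a x, x - Real.sqrt a • x0⟫)

/-- The main (estimation-error-free) term appearing in the density-ratio expansions
of Lemma 6 (eqns (xt) and (yt)). -/
def mainTerm (d T : ℕ) (c0 c1 : ℝ) (pdata : Vec d → ℝ) (t : ℕ) (x : Vec d) : ℝ :=
  1 + (1 - alpha T c0 c1 t) *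
        ((d : ℝ) + BtQ pdata (alphaBar T c0 c1 t) x - AtQ pdata (alphaBar T c0 c1 t) x) /
        (2 * (1 - alphaBar T c0 c1 t)) +
    (1 - alpha T c0 c1 t) ^ 2 / (8 * (1 - alphaBar T c0 c1 t) ^ 2) *
      ((d : ℝ) * ((d : ℝ) + 2) +
        (4 + 2 * (d : ℝ)) *
          (BtQ pdata (alphaBar T c0 c1 t) x - AtQ pdata (alphaBar T c0 c1 t) x) -
        BtQ pdata (alphaBar T c0 c1 t) x ^ 2 + CtQ pdata (alphaBar T c0 c1 t) x +
        2 * DtQ pdata (alphaBar T c0 c1 t) x - 3 * EtQ pdata (alphaBar T c0 c1 t) x +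
        AtQ pdata (alphaBar T c0 c1 t) x * BtQ pdata (alphaBar T c0 c1 t) x)

/-- `μ̂_t⋆(x) = (1/√α_t)(x + (1-α_t) s_t⋆(x))`, with `al = α_t` and `a = ᾱ_t`. -/
def muHatStar (pdata : Vec d → ℝ) (al a : ℝ) (x : Vec d) : Vec d :=
  (Real.sqrt al)⁻¹ • (x + (1 - al) • scoreFun pdata a x)

/-- Conditional law of `H_{t-1}` given `H_t = x` for the auxiliary process
`H_{t-1} = μ̂_t⋆(H_t) + √((1-α_t)/(2α_t)) (Z_t - ((1-α_t)/(1-ᾱ_t)) J_t(H_t) Z_t + Z_t⁺)`. -/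
def auxKernel (d T : ℕ) (c0 c1 : ℝ) (pdata : Vec d → ℝ) (t : ℕ) (x : Vec d) :
    Measure (Vec d) :=
  Measure.map
    (fun p : Vec d × Vec d =>
      muHatStar pdata (alpha T c0 c1 t) (alphaBar T c0 c1 t) x +
        Real.sqrt ((1 - alpha T c0 c1 t) / (2 * alpha T c0 c1 t)) •
          (p.1 -
            ((1 - alpha T c0 c1 t) / (1 - alphaBar T c0 c1 t)) •
              (Jmat pdata (alphaBar T c0 c1 t) x) p.1 +
            p.2))
    ((stdGaussian d).prod (stdGaussian d))

/-- Conditional law of `Y_{t-1}` given `Y_t = x` for the accelerated stochastic sampler. -/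
def sdeKernel (d T : ℕ) (c0 c1 : ℝ) (s : ℕ → Vec d → Vec d) (t : ℕ) (x : Vec d) :
    Measure (Vec d) :=
  Measure.map (fun p : Vec d × Vec d => sdeStep T c0 c1 s t x p.1 p.2)
    ((stdGaussian d).prod (stdGaussian d))

/-- Reverse conditional density `p_{X_{t-1}|X_t}(x'|x)` of the forward chain. -/
def pRev (d T : ℕ) (c0 c1 : ℝ) (pdata : Vec d → ℝ) (t : ℕ) (xprev x : Vec d) : ℝ :=
  qFun pdata (alphaBar T c0 c1 (t - 1)) xprev *
      gaussPdf d (1 - alpha T c0 c1 t) (x - Real.sqrt (alpha T c0 c1 t) • xprev) /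
    qFun pdata (alphaBar T c0 c1 t) x

end Paper

namespace Paper

set_option maxHeartbeats 1000000 in
lemma taylor_rpow_aux (s r : ℝ) (hs : 1/2 ≤ s) (hr : 0 ≤ r) (h : s * r ≤ 1/200) :
    |(1+r) ^ s - (1 + s*r + s*(s-1)/2 * r^2)| ≤ 11 * s^3 * r^3 := by
  have hs0 : 0 < s := by linarith
  have hr1 : r ≤ 1/100 := by nlinarith
  have h1r : (0:ℝ) < 1 + r := by linarith
  set L := Real.log (1+r) with hLdef
  have hL0 : 0 ≤ L := Real.log_nonneg (by linarith)
  have hLr : L ≤ r := by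
    have := Real.log_le_sub_one_of_pos h1r; linarith
  have hlog : |(-r + r^2/2) + L| ≤ r^3/(1-r) := by
    have hx : |(-r : ℝ)| < 1 := by rw [abs_neg, abs_of_nonneg hr]; linarith
    have := Real.abs_log_sub_add_sum_range_le hx 2
    simp only [Finset.sum_range_succ, Finset.sum_range_zero] at this
    rw [abs_neg, abs_of_nonneg hr] at this
    have e1 : (1:ℝ) - -r = 1 + r := by ring
    rw [e1] at this
    convert this using 2 <;> ring
  have he : |L - (r - r^2/2)| ≤ 2 * r^3 := by
    have h2 : r^3/(1-r) ≤ 2*r^3 := by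
      rw [div_le_iff₀ (by linarith)]
      nlinarith [mul_nonneg (pow_nonneg hr 3) (by linarith : (0:ℝ) ≤ 1 - 2*r)]
    have e2 : L - (r - r^2/2) = (-r + r^2/2) + L := by ring
    rw [e2]; exact hlog.trans h2
  set u := s * L with hudef
  have hu0 : 0 ≤ u := mul_nonneg hs0.le hL0
  have hu1 : u ≤ s * r := mul_le_mul_of_nonneg_left hLr hs0.le
  have huabs : |u| ≤ 1 := by rw [abs_of_nonneg hu0]; linarith
  have hexp : |Real.exp u - (1 + u + u^2/2)| ≤ (2/9) * u^3 := by
    have hb := Real.exp_bound huabs (n := 3) (by norm_num)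
    simp only [Finset.sum_range_succ, Finset.sum_range_zero] at hb
    norm_num [Nat.factorial] at hb
    rw [abs_of_nonneg hu0] at hb
    have e3 : (0:ℝ) + 1 + u + u^2/2 = 1 + u + u^2/2 := by ring
    calc |Real.exp u - (1 + u + u^2/2)| = |Real.exp u - (0 + 1 + u + u ^ 2 / 2)| := by rw [e3]
    _ ≤ u ^ 3 * (4 / (6 * 3)) := by
        convert hb using 2 <;> norm_num
    _ ≤ (2/9) * u^3 := by nlinarith [pow_nonneg hu0 3]
  have hrpow : (1+r) ^ s = Real.exp u := by
    rw [Real.rpow_def_of_pos h1r, mul_comm]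
  have hkey : (1 + u + u^2/2) - (1 + s*r + s*(s-1)/2 * r^2)
      = s*(L - (r - r^2/2)) + (u^2 - (s*r)^2)/2 := by
    rw [hudef]; ring
  have h2 : |u^2 - (s*r)^2| ≤ 2*s^2*r^3 := by
    have hd : s*r - u ≤ s * r^2 := by
      have hrl : r - L ≤ r^2/2 + 2*r^3 := by
        have := abs_le.1 he; linarith [this.1]
      calc s*r - u = s * (r - L) := by rw [hudef]; ring
      _ ≤ s * (r^2/2 + 2*r^3) := mul_le_mul_of_nonneg_left hrl hs0.le
      _ ≤ s * r^2 := by nlinarith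
    rw [abs_sub_comm, abs_of_nonneg (by nlinarith)]
    nlinarith [mul_nonneg hs0.le hr]
  have hmid : |(1 + u + u^2/2) - (1 + s*r + s*(s-1)/2 * r^2)|
      ≤ s * (2*r^3) + (2*s^2*r^3)/2 := by
    rw [hkey]
    calc |s*(L - (r - r^2/2)) + (u^2 - (s*r)^2)/2|
        ≤ |s*(L - (r - r^2/2))| + |(u^2 - (s*r)^2)/2| := abs_add_le _ _
      _ = s * |L - (r - r^2/2)| + |u^2 - (s*r)^2|/2 := by
          rw [abs_mul, abs_of_nonneg hs0.le, abs_div]; norm_num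
      _ ≤ s * (2*r^3) + (2*s^2*r^3)/2 := by gcongr
  have hu3 : u^3 ≤ (s*r)^3 := pow_le_pow_left₀ hu0 hu1 3
  calc |(1+r) ^ s - (1 + s*r + s*(s-1)/2 * r^2)|
      ≤ |Real.exp u - (1 + u + u^2/2)| + |(1 + u + u^2/2) - (1 + s*r + s*(s-1)/2 * r^2)| := by
        rw [hrpow]; exact abs_sub_le _ _ _
    _ ≤ (2/9)*u^3 + (s * (2*r^3) + (2*s^2*r^3)/2) := add_le_add hexp hmid
    _ ≤ 11 * s^3 * r^3 := by
        have h1 : s ≤ 4*s^3 := by nlinarith [sq_nonneg (2*s-1), sq_nonneg s]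
        have h2 : s^2 ≤ 2*s^3 := by nlinarith [sq_nonneg s]
        have hr3 : 0 ≤ r^3 := pow_nonneg hr 3
        nlinarith [mul_le_mul_of_nonneg_right h1 hr3, mul_le_mul_of_nonneg_right h2 hr3,
          mul_nonneg (pow_nonneg hs0.le 3) hr3]

lemma delta_bound_aux (T : ℕ) (hT : 10^12 ≤ T) :
    0 < 100000 * Real.log T / T ∧ 100000 * Real.log T / T ≤ 1/2 := by
  have hT' : (10^12 : ℝ) ≤ T := by exact_mod_cast hT
  have hTpos : (0:ℝ) < T := by linarith
  have hlog : 0 < Real.log T := Real.log_pos (by linarith)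
  refine ⟨by positivity, ?_⟩
  have hs : Real.log T ≤ 2 * Real.sqrt T := by
    have h1 : Real.log (Real.sqrt T) ≤ Real.sqrt T - 1 :=
      Real.log_le_sub_one_of_pos (Real.sqrt_pos.2 hTpos)
    have h2 : Real.log (Real.sqrt T) = Real.log T / 2 := Real.log_sqrt hTpos.le
    nlinarith [Real.sqrt_nonneg (T:ℝ)]
  have hsq : (10^6 : ℝ) ≤ Real.sqrt T := by
    rw [show ((10:ℝ)^6) = Real.sqrt ((10^6)^2) from (Real.sqrt_sq (by norm_num)).symm]
    apply Real.sqrt_le_sqrt; norm_num at hT' ⊢; linarith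
  have hTsq : (T:ℝ) = Real.sqrt T * Real.sqrt T := (Real.mul_self_sqrt hTpos.le).symm
  rw [div_le_iff₀ hTpos]
  calc 100000 * Real.log T ≤ 100000 * (2*Real.sqrt T) := by nlinarith
  _ ≤ 1/2 * ((T:ℝ)) := by nlinarith [mul_le_mul_of_nonneg_right hsq (Real.sqrt_nonneg (T:ℝ))]

lemma beta_bounds_aux (T : ℕ) (hT : 10^12 ≤ T) (k : ℕ) :
    0 < beta T 1 100000 k ∧ beta T 1 100000 k ≤ 1/2 := by
  obtain ⟨hd0, hd1⟩ := delta_bound_aux T hT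
  have hT' : (10^12 : ℝ) ≤ T := by exact_mod_cast hT
  have hTpos : (0:ℝ) < T := by linarith
  unfold beta
  rw [Real.rpow_one]
  split
  · constructor
    · positivity
    · rw [div_le_iff₀ hTpos]; linarith
  · have h1d : (0:ℝ) < 1 + 100000 * Real.log ↑T / ↑T := by linarith
    have hmin : 0 < min (1/(T:ℝ) * (1 + 100000 * Real.log ↑T / ↑T)^k) 1 :=
      lt_min (by positivity) one_pos
    refine ⟨mul_pos hd0 hmin, ?_⟩
    calc 100000 * Real.log ↑T / ↑T * min (1/(T:ℝ) * (1 + 100000 * Real.log ↑T / ↑T)^k) 1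
        ≤ 100000 * Real.log ↑T / ↑T * 1 := by
          exact mul_le_mul_of_nonneg_left (min_le_right _ _) hd0.le
      _ ≤ 1/2 := by linarith

lemma alpha_bounds_aux (T : ℕ) (hT : 10^12 ≤ T) (k : ℕ) :
    1/2 ≤ alpha T 1 100000 k ∧ alpha T 1 100000 k < 1 := by
  obtain ⟨h1, h2⟩ := beta_bounds_aux T hT k
  unfold alpha
  constructor <;> linarith

lemma alphaBar_bounds_aux (T : ℕ) (hT : 10^12 ≤ T) (m : ℕ) (hm : 1 ≤ m) :
    0 < alphaBar T 1 100000 m ∧ alphaBar T 1 100000 m < 1 := by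
  induction m, hm using Nat.le_induction with
  | base =>
    obtain ⟨h1, h2⟩ := alpha_bounds_aux T hT 1
    unfold alphaBar
    simp only [Finset.Icc_self, Finset.prod_singleton]
    exact ⟨by linarith, h2⟩
  | succ n hn ih =>
    obtain ⟨h1, h2⟩ := alpha_bounds_aux T hT (n+1)
    have hsucc : alphaBar T 1 100000 (n+1) = alphaBar T 1 100000 n * alpha T 1 100000 (n+1) := by
      unfold alphaBar
      rw [Finset.prod_Icc_succ_top (by omega : 1 ≤ n + 1)]
    rw [hsucc]
    constructor
    · exact mul_pos ih.1 (by linarith)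
    · nlinarith [ih.1, ih.2]

end Paper


namespace Paper

lemma alphaBar_decay_aux (T : ℕ) (hT : 10^12 ≤ T) :
    alphaBar T 1 100000 T ≤ 1 / (T:ℝ) ^ (1000:ℝ) := by
  obtain ⟨hd0, hd1⟩ := delta_bound_aux T hT
  have hT' : (10^12 : ℝ) ≤ T := by exact_mod_cast hT
  have hTpos : (0:ℝ) < T := by linarith
  have hlog : 0 < Real.log T := Real.log_pos (by linarith)
  set δ : ℝ := 100000 * Real.log T / T with hδdef
  set K := T / 50000 with hKdef
  have hKT : K ≤ T := Nat.div_le_self T 50000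
  have hK1 : 1 ≤ K := by omega
  -- each alpha in the tail equals 1 - δ
  have htail : ∀ k ∈ Finset.Ioc K T, alpha T 1 100000 k = 1 - δ := by
    intro k hk
    rw [Finset.mem_Ioc] at hk
    have hk2 : ¬ (k ≤ 1) := by omega
    have hk50 : (T:ℝ) ≤ 50000 * k := by
      have hmod := Nat.div_add_mod T 50000
      have hmlt : T % 50000 < 50000 := Nat.mod_lt T (by norm_num)
      have : T ≤ 50000 * k := by
        calc T = 50000 * K + T % 50000 := hmod.symm
        _ ≤ 50000 * K + 50000 := by omega
        _ = 50000 * (K + 1) := by ring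
        _ ≤ 50000 * k := by
            have : K + 1 ≤ k := hk.1
            exact Nat.mul_le_mul_left _ this
      exact_mod_cast this
    have h1δ : (0:ℝ) < 1 + δ := by linarith
    -- log(1+δ) ≥ δ/2
    have hlg : δ/2 ≤ Real.log (1+δ) := by
      have h := Real.log_le_sub_one_of_pos (show (0:ℝ) < (1+δ)⁻¹ by positivity)
      rw [Real.log_inv] at h
      have h2 : 1 - (1+δ)⁻¹ ≤ Real.log (1+δ) := by linarith
      have h3 : δ/2 ≤ 1 - (1+δ)⁻¹ := by
        rw [le_sub_iff_add_le, inv_eq_one_div, div_add_div _ _ (by norm_num) (by linarith : (1:ℝ)+δ ≠ 0), div_le_one (by linarith)]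
        nlinarith
      linarith
    -- log T ≤ k * (δ/2)
    have hkd : Real.log T ≤ (k:ℝ) * (δ/2) := by
      have hd2 : (k:ℝ) * (δ/2) = 50000 * k * Real.log T / T := by rw [hδdef]; ring
      rw [hd2, le_div_iff₀ hTpos]
      nlinarith
    have hTk : (T:ℝ) ≤ (1+δ)^k := by
      have e : (1+δ)^k = Real.exp ((k:ℝ) * Real.log (1+δ)) := by
        rw [Real.exp_nat_mul, Real.exp_log h1δ]
      calc (T:ℝ) = Real.exp (Real.log T) := (Real.exp_log hTpos).symm
      _ ≤ Real.exp ((k:ℝ) * Real.log (1+δ)) := by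
          apply Real.exp_le_exp.2
          calc Real.log T ≤ (k:ℝ) * (δ/2) := hkd
          _ ≤ (k:ℝ) * Real.log (1+δ) := by
              apply mul_le_mul_of_nonneg_left hlg (Nat.cast_nonneg k)
      _ = (1+δ)^k := e.symm
    unfold alpha beta
    rw [if_neg hk2, Real.rpow_one]
    have hmin : min (1/(T:ℝ) * (1+δ)^k) 1 = 1 := by
      apply min_eq_right
      rw [one_div, inv_mul_eq_div, le_div_iff₀ hTpos, one_mul]
      exact hTk
    rw [hmin, mul_one]
  have hsplit : alphaBar T 1 100000 T =
      (∏ k ∈ Finset.Ioc 0 K, alpha T 1 100000 k) * ∏ k ∈ Finset.Ioc K T, alpha T 1 100000 k := by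
    rw [alphaBar, show Finset.Icc 1 T = Finset.Ioc 0 T from Finset.Icc_add_one_left_eq_Ioc 0 T,
      Finset.prod_Ioc_consecutive _ (Nat.zero_le K) hKT]
  have h1 : (∏ k ∈ Finset.Ioc 0 K, alpha T 1 100000 k) ≤ 1 :=
    Finset.prod_le_one (fun i _ => by linarith [(alpha_bounds_aux T hT i).1])
      (fun i _ => (alpha_bounds_aux T hT i).2.le)
  have h2 : (∏ k ∈ Finset.Ioc K T, alpha T 1 100000 k) = (1-δ)^(T-K) := by
    rw [Finset.prod_congr rfl htail, Finset.prod_const, Nat.card_Ioc]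
  have hδ01 : 0 ≤ 1 - δ := by linarith
  have h3 : (1-δ)^(T-K) ≤ Real.exp (-(((T-K : ℕ):ℝ) * δ)) := by
    calc (1-δ)^(T-K) ≤ (Real.exp (-δ))^(T-K) := by
          apply pow_le_pow_left₀ hδ01
          linarith [Real.add_one_le_exp (-δ)]
    _ = Real.exp (-(((T-K : ℕ):ℝ) * δ)) := by
          rw [← Real.exp_nat_mul]; ring_nf
  have hcast : ((T-K : ℕ):ℝ) = (T:ℝ) - K := by
    rw [Nat.cast_sub hKT]
  have hKle : 50000 * (K:ℝ) ≤ T := by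
    have := Nat.div_mul_le_self T 50000
    have : (K * 50000 : ℕ) ≤ T := this
    have := (Nat.cast_le (α := ℝ)).2 this
    push_cast at this
    linarith
  have hD : (T:ℝ)/2 ≤ ((T-K : ℕ):ℝ) := by rw [hcast]; linarith
  have h4 : 1000 * Real.log T ≤ ((T-K : ℕ):ℝ) * δ := by
    have hd3 : ((T-K : ℕ):ℝ) * δ = 100000 * Real.log T * ((T-K : ℕ):ℝ) / T := by
      rw [hδdef]; ring
    rw [hd3, le_div_iff₀ hTpos]
    nlinarith [mul_le_mul_of_nonneg_left hD (by positivity : (0:ℝ) ≤ 100000 * Real.log T)]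
  have h5 : Real.exp (-(((T-K : ℕ):ℝ) * δ)) ≤ 1 / (T:ℝ) ^ (1000:ℝ) := by
    have e : (1:ℝ) / (T:ℝ) ^ (1000:ℝ) = Real.exp (-(Real.log T * 1000)) := by
      rw [Real.rpow_def_of_pos hTpos, one_div, ← Real.exp_neg]
    rw [e]
    apply Real.exp_le_exp.2
    linarith
  calc alphaBar T 1 100000 T
      = (∏ k ∈ Finset.Ioc 0 K, alpha T 1 100000 k) * ∏ k ∈ Finset.Ioc K T, alpha T 1 100000 k := hsplit
    _ ≤ ∏ k ∈ Finset.Ioc K T, alpha T 1 100000 k := by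
        apply mul_le_of_le_one_left _ h1
        rw [h2]; positivity
    _ = (1-δ)^(T-K) := h2
    _ ≤ Real.exp (-(((T-K : ℕ):ℝ) * δ)) := h3
    _ ≤ 1 / (T:ℝ) ^ (1000:ℝ) := h5

end Paper


namespace Paper

/-- learning-rate properties (39), part 2: for all large enough `T`,
`ᾱ_T ≤ 1/T^{c₂}` for some constant `c₂ ≥ 1000`, and there is a universal `C > 0` such that
whenever `d (1-α_t)/(α_t-ᾱ_t) ≤ 1/C`, the quantity `((1-ᾱ_t)/(α_t-ᾱ_t))^{d/2}` equals
`1 + d(1-α_t)/(2(α_t-ᾱ_t)) + d(d-2)(1-α_t)²/(8(α_t-ᾱ_t)²)`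
up to an error of `C d³ ((1-α_t)/(α_t-ᾱ_t))³`. -/
theorem alphaBar_decay_and_ratio_expansion :
    ∃ c0 c1 c2 : ℝ, 0 < c0 ∧ 0 < c1 ∧ 1000 ≤ c2 ∧
      ∃ C : ℝ, 0 < C ∧
        ∃ T0 : ℕ, ∀ T : ℕ, T0 ≤ T →
          alphaBar T c0 c1 T ≤ 1 / (T : ℝ) ^ c2 ∧
            ∀ (d t : ℕ), 1 ≤ d → 2 ≤ t → t ≤ T →
              (d : ℝ) * (1 - alpha T c0 c1 t) / (alpha T c0 c1 t - alphaBar T c0 c1 t) ≤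
                1 / C →
              |((1 - alphaBar T c0 c1 t) / (alpha T c0 c1 t - alphaBar T c0 c1 t)) ^
                    ((d : ℝ) / 2) -
                  (1 + (d : ℝ) * (1 - alpha T c0 c1 t) /
                      (2 * (alpha T c0 c1 t - alphaBar T c0 c1 t)) +
                    (d : ℝ) * ((d : ℝ) - 2) * (1 - alpha T c0 c1 t) ^ 2 /
                      (8 * (alpha T c0 c1 t - alphaBar T c0 c1 t) ^ 2))| ≤
                C * (d : ℝ) ^ 3 *
                  ((1 - alpha T c0 c1 t) / (alpha T c0 c1 t - alphaBar T c0 c1 t)) ^ 3 := by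
  refine ⟨1, 100000, 1000, by norm_num, by norm_num, by norm_num, 400, by norm_num, 10^12, ?_⟩
  intro T hT
  refine ⟨alphaBar_decay_aux T hT, ?_⟩
  intro d t hd ht htT hhyp
  obtain ⟨t', rfl⟩ : ∃ t', t = t' + 1 := ⟨t - 1, by omega⟩
  set A := alpha T 1 100000 (t'+1) with hA
  set B := alphaBar T 1 100000 (t'+1) with hB
  obtain ⟨hA1, hA2⟩ := alpha_bounds_aux T hT (t'+1)
  obtain ⟨hB1, hB2⟩ := alphaBar_bounds_aux T hT t' (by omega)
  have hBsplit : B = alphaBar T 1 100000 t' * A := by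
    rw [hB, hA, alphaBar, Finset.prod_Icc_succ_top (by omega : 1 ≤ t' + 1)]
    rfl
  have hABpos : 0 < A - B := by rw [hBsplit]; nlinarith
  have hne : A - B ≠ 0 := ne_of_gt hABpos
  set r := (1-A)/(A-B) with hrdef
  have hr0 : 0 ≤ r := div_nonneg (by linarith) hABpos.le
  have hd' : (1:ℝ) ≤ d := by exact_mod_cast hd
  set s : ℝ := (d:ℝ)/2 with hsdef
  have hs : 1/2 ≤ s := by rw [hsdef]; linarith
  have hsr : s * r ≤ 1/200 := by
    have h1 : s * r = ((d:ℝ) * (1-A) / (A-B))/2 := by rw [hsdef, hrdef]; ring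
    rw [h1]; linarith
  have htay := taylor_rpow_aux s r hs hr0 hsr
  have e1 : (1-B)/(A-B) = 1 + r := by rw [hrdef]; field_simp; ring
  have e2 : 1 + (d:ℝ)*(1-A)/(2*(A-B)) + (d:ℝ)*((d:ℝ)-2)*(1-A)^2/(8*(A-B)^2)
      = 1 + s*r + s*(s-1)/2*r^2 := by
    rw [hsdef, hrdef]; field_simp; ring
  rw [e1, e2]
  refine htay.trans ?_
  have e3 : 11*s^3*r^3 = (11/8)*(d:ℝ)^3*r^3 := by rw [hsdef]; ring
  rw [e3]
  have hd3 : (0:ℝ) ≤ (d:ℝ)^3*r^3 :=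
    mul_nonneg (pow_nonneg (by linarith) 3) (pow_nonneg hr0 3)
  nlinarith


end Paper
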